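/- In dimension d = 1, let E, F ⊂ {1}, and let α ∈ A(E), β ∈ A(F) satisfy m_E(α) < 0 and m_F(β) < 0. Define, for measurable f ≥ 0 and θ ∈ (0,π), N^{(α,E),(β,F)} f(θ) = ∫_0^π χ_{{|θ−φ| ≥ π/2}} [ sup_{0<t≤1} 𝕂_t^{(α,E),(β,F)}(θ,φ) ] f(φ) dη_{α,β}(φ). Then there is a constant C such that ∫_0^π N^{(α,E),(β,F)} f(θ) dη_{α,β}(θ) ≤ C ∫_0^π f(φ) dη_{α,β}(φ) for every 0 ≤ f ∈ L¹(dη_{α,β}); i.e. N^{(α,E),(β,F)} is of strong type (1,1) with respect to η_{α,β}. -/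

import Mathlib

open MeasureTheory

/-- The Jacobi-type kernel
`K_t^{a,b}(θ,φ) = (θφ + t)^{−a−1/2} ((π−θ)(π−φ) + t)^{−b−1/2} t^{−1/2} exp(−c₂(θ−φ)²/t)`. -/
noncomputable def Kj (c₂ a b t θ φ : ℝ) : ℝ :=
  (θ * φ + t) ^ (-a - 1 / 2) * ((Real.pi - θ) * (Real.pi - φ) + t) ^ (-b - 1 / 2) *
    t ^ (-(1 : ℝ) / 2) * Real.exp (-c₂ * (θ - φ) ^ 2 / t)

/-- The product kernel `𝕂_t^{(α,E),(β,F)}(θ,φ)`: the `i`-th factor is the classical kernel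
`K_t^{α_i,β_i}` for `i ∉ E ∪ F`, and acquires the exotic factor `(θ_i φ_i)^{−2α_i}` together
with the sign flip `α_i ↦ −α_i` when `i ∈ E`, resp. `((π−θ_i)(π−φ_i))^{−2β_i}` together with
`β_i ↦ −β_i` when `i ∈ F`. -/
noncomputable def KKj (d : ℕ) (c₂ : ℝ) (E F : Finset (Fin d)) (α β : Fin d → ℝ)
    (t : ℝ) (θ φ : Fin d → ℝ) : ℝ :=
  ∏ i, ((θ i * φ i) ^ (if i ∈ E then -2 * α i else 0) *
    ((Real.pi - θ i) * (Real.pi - φ i)) ^ (if i ∈ F then -2 * β i else 0) *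
    Kj c₂ (if i ∈ E then -α i else α i) (if i ∈ F then -β i else β i) t (θ i) (φ i))

/-- The measure `η_{α,β}` on `(0,π)^d` with density `∏ θ_i^{2α_i+1}(π−θ_i)^{2β_i+1}`. -/
noncomputable def etaM (d : ℕ) (α β : Fin d → ℝ) : Measure (Fin d → ℝ) :=
  ((volume : Measure (Fin d → ℝ)).withDensity fun θ =>
    ENNReal.ofReal (∏ i, θ i ^ (2 * α i + 1) * (Real.pi - θ i) ^ (2 * β i + 1))).restrict
    {θ | ∀ i, 0 < θ i ∧ θ i < Real.pi}

section Stmt19Aux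
open Real Set
open scoped ENNReal

private lemma stmt19_aux_exp (c M : ℝ) (hc : 0 < c) :
    ∃ B : ℝ, 0 < B ∧ ∀ t ∈ Set.Ioc (0:ℝ) 1, t ^ (-M) * Real.exp (-c / t) ≤ B := by
  obtain ⟨n, hn⟩ := exists_nat_ge M
  refine ⟨(n.factorial : ℝ) / c ^ n, by positivity, fun t ht => ?_⟩
  obtain ⟨ht0, ht1⟩ := ht
  have hs1 : (1:ℝ) ≤ 1 / t := by rw [le_div_iff₀ ht0]; linarith
  have h1 : t ^ (-M) = (1/t) ^ M := by
    rw [one_div, Real.inv_rpow ht0.le, ← Real.rpow_neg ht0.le]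
  have h2 : (1/t) ^ M ≤ (1/t) ^ (n:ℝ) := Real.rpow_le_rpow_of_exponent_le hs1 hn
  have h3 : (1/t) ^ (n:ℝ) = (1/t) ^ n := Real.rpow_natCast _ n
  have h5 : (c * (1/t)) ^ n / n.factorial ≤ Real.exp (c * (1/t)) :=
    Real.pow_div_factorial_le_exp _ (by positivity) n
  have hexp : Real.exp (-c / t) ≤ (n.factorial : ℝ) / (c * (1/t)) ^ n := by
    have h4 : Real.exp (-c / t) = (Real.exp (c * (1/t)))⁻¹ := by
      rw [← Real.exp_neg]; ring_nf
    have h6 : (Real.exp (c * (1/t)))⁻¹ ≤ ((c * (1/t)) ^ n / n.factorial)⁻¹ :=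
      inv_anti₀ (by positivity) h5
    rw [h4]
    exact h6.trans_eq (inv_div _ _)
  calc t ^ (-M) * Real.exp (-c / t) ≤ (1/t)^n * ((n.factorial : ℝ) / (c * (1/t)) ^ n) := by
        rw [h1]
        exact mul_le_mul (h2.trans h3.le) hexp (Real.exp_pos _).le (by positivity)
    _ = (n.factorial : ℝ) / c ^ n := by
        rw [mul_pow]
        field_simp

private lemma stmt19_factor_bound (z t e : ℝ) (hz : 0 ≤ z) (hzt : z + t ≤ Real.pi ^ 2 + 1)
    (ht : t ∈ Set.Ioc (0:ℝ) 1) :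
    (z + t) ^ e ≤ (Real.pi ^ 2 + 1) ^ |e| * t ^ (-|e|) := by
  have hπ : (1:ℝ) ≤ Real.pi ^ 2 + 1 := by nlinarith [Real.pi_pos]
  rcases le_or_gt 0 e with he | he
  · rw [abs_of_nonneg he]
    have h1 : (z + t) ^ e ≤ (Real.pi ^ 2 + 1) ^ e :=
      Real.rpow_le_rpow (by linarith [ht.1]) hzt he
    have h2 : (1:ℝ) ≤ t ^ (-e) :=
      Real.one_le_rpow_of_pos_of_le_one_of_nonpos ht.1 ht.2 (by linarith)
    calc (z + t) ^ e ≤ (Real.pi ^ 2 + 1) ^ e * 1 := by linarith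
      _ ≤ (Real.pi ^ 2 + 1) ^ e * t ^ (-e) := by
          have : (0:ℝ) ≤ (Real.pi ^ 2 + 1) ^ e := by positivity
          nlinarith
  · rw [abs_of_neg he]
    have h1 : (z + t) ^ e ≤ t ^ e :=
      Real.rpow_le_rpow_of_nonpos ht.1 (by linarith) he.le
    have h2 : (1:ℝ) ≤ (Real.pi ^ 2 + 1) ^ (-e) := Real.one_le_rpow hπ (by linarith)
    have h3 : (0:ℝ) ≤ t ^ e := Real.rpow_nonneg ht.1.le _
    calc (z + t) ^ e ≤ t ^ e := h1
      _ = 1 * t ^ (- -e) := by rw [neg_neg, one_mul]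
      _ ≤ (Real.pi ^ 2 + 1) ^ (-e) * t ^ (- -e) := by
          rw [neg_neg]; nlinarith


private lemma stmt19_kernel_bound (c₂ : ℝ) (hc₂ : 0 < c₂) (u v a b : ℝ) (hu : 0 ≤ u) (hv : 0 ≤ v) :
    ∃ B : ℝ, 0 < B ∧ ∀ t ∈ Set.Ioc (0:ℝ) 1, ∀ x y : ℝ, 0 < x → x < Real.pi → 0 < y →
      y < Real.pi → Real.pi / 2 ≤ |x - y| →
      (x * y) ^ u * ((Real.pi - x) * (Real.pi - y)) ^ v * Kj c₂ a b t x y ≤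
        B * (x ^ u * (Real.pi - x) ^ v) := by
  have hπ := Real.pi_pos
  have hcpos : 0 < c₂ * (Real.pi / 2) ^ 2 := by positivity
  obtain ⟨B₀, hB₀, hB⟩ := stmt19_aux_exp (c₂ * (Real.pi / 2) ^ 2) (|(-a - 1/2 : ℝ)| + |(-b - 1/2 : ℝ)| + 1/2) hcpos
  refine ⟨Real.pi ^ u * Real.pi ^ v * ((Real.pi ^ 2 + 1) ^ |(-a - 1/2 : ℝ)| *
      (Real.pi ^ 2 + 1) ^ |(-b - 1/2 : ℝ)| * B₀), by positivity,
    fun t ht x y hx hxπ hy hyπ hxy => ?_⟩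
  have ht0 := ht.1
  have h1 : (x * y) ^ u = x ^ u * y ^ u := Real.mul_rpow hx.le hy.le
  have h2 : ((Real.pi - x) * (Real.pi - y)) ^ v = (Real.pi - x) ^ v * (Real.pi - y) ^ v :=
    Real.mul_rpow (by linarith) (by linarith)
  have hyu : y ^ u ≤ Real.pi ^ u := Real.rpow_le_rpow hy.le (by linarith) hu
  have hyv : (Real.pi - y) ^ v ≤ Real.pi ^ v := Real.rpow_le_rpow (by linarith) (by linarith) hv
  have hb1 : (0:ℝ) ≤ x * y + t := by positivity
  have hb2 : (0:ℝ) ≤ (Real.pi - x) * (Real.pi - y) + t := by nlinarith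
  have hf1 : (x * y + t) ^ (-a - 1/2 : ℝ) ≤
      (Real.pi ^ 2 + 1) ^ |(-a - 1/2 : ℝ)| * t ^ (-|(-a - 1/2 : ℝ)|) :=
    stmt19_factor_bound _ _ _ (by positivity)
      (by have := mul_le_mul hxπ.le hyπ.le hy.le hπ.le; nlinarith [ht.2]) ht
  have hf2 : ((Real.pi - x) * (Real.pi - y) + t) ^ (-b - 1/2 : ℝ) ≤
      (Real.pi ^ 2 + 1) ^ |(-b - 1/2 : ℝ)| * t ^ (-|(-b - 1/2 : ℝ)|) :=
    stmt19_factor_bound _ _ _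
      (by have h := mul_nonneg (by linarith : (0:ℝ) ≤ Real.pi - x)
            (by linarith : (0:ℝ) ≤ Real.pi - y)
          linarith)
      (by have := mul_le_mul (by linarith : Real.pi - x ≤ Real.pi)
            (by linarith : Real.pi - y ≤ Real.pi) (by linarith) hπ.le
          nlinarith [ht.2]) ht
  have hE : Real.exp (-c₂ * (x - y) ^ 2 / t) ≤ Real.exp (-(c₂ * (Real.pi / 2) ^ 2) / t) := by
    apply Real.exp_le_exp.mpr
    have h7 : (Real.pi / 2) ^ 2 ≤ (x - y) ^ 2 := by
      have := pow_le_pow_left₀ (by positivity : (0:ℝ) ≤ Real.pi / 2) hxy 2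
      rwa [sq_abs] at this
    have hnum : c₂ * (Real.pi / 2) ^ 2 ≤ c₂ * (x - y) ^ 2 :=
      mul_le_mul_of_nonneg_left h7 hc₂.le
    rw [div_le_div_iff₀ ht0 ht0]
    nlinarith [mul_le_mul_of_nonneg_right hnum ht0.le]
  have hT : t ^ (-|(-a - 1/2 : ℝ)|) * t ^ (-|(-b - 1/2 : ℝ)|) * t ^ (-(1:ℝ)/2) *
      Real.exp (-(c₂ * (Real.pi / 2) ^ 2) / t) ≤ B₀ := by
    have he : t ^ (-|(-a - 1/2 : ℝ)|) * t ^ (-|(-b - 1/2 : ℝ)|) * t ^ (-(1:ℝ)/2) =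
        t ^ (-(|(-a - 1/2 : ℝ)| + |(-b - 1/2 : ℝ)| + 1/2)) := by
      rw [show -(|(-a - 1/2 : ℝ)| + |(-b - 1/2 : ℝ)| + 1/2) =
        -|(-a - 1/2 : ℝ)| + -|(-b - 1/2 : ℝ)| + (-(1:ℝ)/2) by ring,
        Real.rpow_add ht0, Real.rpow_add ht0]
    rw [he]
    exact hB t ht
  have hKj : Kj c₂ a b t x y ≤ (Real.pi ^ 2 + 1) ^ |(-a - 1/2 : ℝ)| *
      (Real.pi ^ 2 + 1) ^ |(-b - 1/2 : ℝ)| * B₀ := by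
    rw [Kj]
    calc (x * y + t) ^ (-a - 1/2 : ℝ) * ((Real.pi - x) * (Real.pi - y) + t) ^ (-b - 1/2 : ℝ) *
          t ^ (-(1:ℝ)/2) * Real.exp (-c₂ * (x - y) ^ 2 / t)
        ≤ ((Real.pi ^ 2 + 1) ^ |(-a - 1/2 : ℝ)| * t ^ (-|(-a - 1/2 : ℝ)|)) *
          ((Real.pi ^ 2 + 1) ^ |(-b - 1/2 : ℝ)| * t ^ (-|(-b - 1/2 : ℝ)|)) * t ^ (-(1:ℝ)/2) *
          Real.exp (-(c₂ * (Real.pi / 2) ^ 2) / t) := by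
          gcongr ?_ * ?_ * ?_ * ?_ <;> first
            | exact hf1 | exact hf2 | exact le_rfl | exact hE
            | exact Real.rpow_nonneg hb1 _ | exact Real.rpow_nonneg hb2 _
            | positivity
      _ = (Real.pi ^ 2 + 1) ^ |(-a - 1/2 : ℝ)| * (Real.pi ^ 2 + 1) ^ |(-b - 1/2 : ℝ)| *
          (t ^ (-|(-a - 1/2 : ℝ)|) * t ^ (-|(-b - 1/2 : ℝ)|) * t ^ (-(1:ℝ)/2) *
          Real.exp (-(c₂ * (Real.pi / 2) ^ 2) / t)) := by ring
      _ ≤ (Real.pi ^ 2 + 1) ^ |(-a - 1/2 : ℝ)| * (Real.pi ^ 2 + 1) ^ |(-b - 1/2 : ℝ)| * B₀ := by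
          have h0 : (0:ℝ) ≤ (Real.pi ^ 2 + 1) ^ |(-a - 1/2 : ℝ)| *
              (Real.pi ^ 2 + 1) ^ |(-b - 1/2 : ℝ)| := by positivity
          exact mul_le_mul_of_nonneg_left hT h0
  have hKnn : 0 ≤ Kj c₂ a b t x y := by
    rw [Kj]
    exact mul_nonneg (mul_nonneg (mul_nonneg (Real.rpow_nonneg hb1 _)
      (Real.rpow_nonneg hb2 _)) (Real.rpow_nonneg ht0.le _)) (Real.exp_pos _).le
  calc (x * y) ^ u * ((Real.pi - x) * (Real.pi - y)) ^ v * Kj c₂ a b t x y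
      = x ^ u * (Real.pi - x) ^ v * (y ^ u * ((Real.pi - y) ^ v * Kj c₂ a b t x y)) := by
        rw [h1, h2]; ring
    _ ≤ x ^ u * (Real.pi - x) ^ v * (Real.pi ^ u * (Real.pi ^ v *
          ((Real.pi ^ 2 + 1) ^ |(-a - 1/2 : ℝ)| * (Real.pi ^ 2 + 1) ^ |(-b - 1/2 : ℝ)| * B₀))) := by
        have hstep : y ^ u * ((Real.pi - y) ^ v * Kj c₂ a b t x y) ≤ Real.pi ^ u * (Real.pi ^ v *
            ((Real.pi ^ 2 + 1) ^ |(-a - 1/2 : ℝ)| * (Real.pi ^ 2 + 1) ^ |(-b - 1/2 : ℝ)| * B₀)) := by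
          apply mul_le_mul hyu _ _ (by positivity)
          · exact mul_le_mul hyv hKj hKnn (by positivity)
          · exact mul_nonneg (Real.rpow_nonneg (by linarith) v) hKnn
        exact mul_le_mul_of_nonneg_left hstep
          (mul_nonneg (Real.rpow_nonneg hx.le u) (Real.rpow_nonneg (by linarith) v))
    _ = Real.pi ^ u * Real.pi ^ v * ((Real.pi ^ 2 + 1) ^ |(-a - 1/2 : ℝ)| *
          (Real.pi ^ 2 + 1) ^ |(-b - 1/2 : ℝ)| * B₀) * (x ^ u * (Real.pi - x) ^ v) := by
        ring

private lemma stmt19_rpow_le_max {m Mz z : ℝ} (q : ℝ) (hm : 0 < m) (h1 : m ≤ z) (h2 : z ≤ Mz) :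
    z ^ q ≤ max (m ^ q) (Mz ^ q) := by
  rcases le_or_gt 0 q with h | h
  · exact le_max_of_le_right (Real.rpow_le_rpow (hm.le.trans h1) h2 h)
  · exact le_max_of_le_left (Real.rpow_le_rpow_of_nonpos hm h1 h.le)


private lemma stmt19_integ_half_left (p : ℝ) (hp : -1 < p) (c : ℝ) (hc : 0 < c) :
    IntegrableOn (fun x : ℝ => x ^ p) (Set.Ioc 0 c) := by
  have h := intervalIntegral.intervalIntegrable_rpow' (a := 0) (b := c) hp
  rw [intervalIntegrable_iff, uIoc_of_le hc.le] at h
  exact h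


private lemma stmt19_integ_pq (p q : ℝ) (hp : -1 < p) (hq : -1 < q) :
    IntegrableOn (fun x : ℝ => x ^ p * (Real.pi - x) ^ q) (Set.Ioo 0 Real.pi) := by
  have hπ := Real.pi_pos
  have hmeas : Measurable fun x : ℝ => x ^ p * (Real.pi - x) ^ q := by fun_prop
  have hL : IntegrableOn (fun x : ℝ => x ^ p * (Real.pi - x) ^ q)
      (Set.Ioc 0 (Real.pi / 2)) := by
    have hg : IntegrableOn (fun x : ℝ => max ((Real.pi/2) ^ q) (Real.pi ^ q) * x ^ p)
        (Set.Ioc 0 (Real.pi / 2)) :=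
      (stmt19_integ_half_left p hp _ (by positivity)).const_mul _
    refine hg.integrable.mono' hmeas.aestronglyMeasurable ?_
    refine (ae_restrict_iff' measurableSet_Ioc).mpr (Filter.Eventually.of_forall fun x hx => ?_)
    obtain ⟨hx0, hx1⟩ := hx
    have h1 : (Real.pi - x) ^ q ≤ max ((Real.pi/2) ^ q) (Real.pi ^ q) :=
      stmt19_rpow_le_max q (by positivity) (by linarith) (by linarith)
    have h2 : 0 ≤ x ^ p := Real.rpow_nonneg hx0.le _
    have h3 : 0 ≤ (Real.pi - x) ^ q := Real.rpow_nonneg (by linarith) _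
    rw [Real.norm_eq_abs, abs_of_nonneg (mul_nonneg h2 h3)]
    calc x ^ p * (Real.pi - x) ^ q ≤ x ^ p * max ((Real.pi/2) ^ q) (Real.pi ^ q) :=
          mul_le_mul_of_nonneg_left h1 h2
      _ = max ((Real.pi/2) ^ q) (Real.pi ^ q) * x ^ p := by ring
  have hR : IntegrableOn (fun x : ℝ => x ^ p * (Real.pi - x) ^ q)
      (Set.Ico (Real.pi / 2) Real.pi) := by
    have hbase : IntegrableOn (fun x : ℝ => (Real.pi - x) ^ q)
        (Set.Ico (Real.pi / 2) Real.pi) := by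
      have h := (intervalIntegral.intervalIntegrable_rpow' (a := 0) (b := Real.pi / 2)
        hq).comp_sub_left Real.pi
      rw [intervalIntegrable_iff] at h
      have he : Set.uIoc (Real.pi - 0) (Real.pi - Real.pi / 2) = Set.Ioc (Real.pi/2) Real.pi := by
        rw [Set.uIoc_of_ge (by linarith), sub_zero,
          show Real.pi - Real.pi/2 = Real.pi/2 by ring]
      rw [he] at h
      exact h.congr_set_ae MeasureTheory.Ico_ae_eq_Ioc
    have hg : IntegrableOn (fun x : ℝ => max ((Real.pi/2) ^ p) (Real.pi ^ p) * (Real.pi - x) ^ q)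
        (Set.Ico (Real.pi / 2) Real.pi) := hbase.const_mul _
    refine hg.integrable.mono' hmeas.aestronglyMeasurable ?_
    refine (ae_restrict_iff' measurableSet_Ico).mpr (Filter.Eventually.of_forall fun x hx => ?_)
    obtain ⟨hx0, hx1⟩ := hx
    have h1 : x ^ p ≤ max ((Real.pi/2) ^ p) (Real.pi ^ p) :=
      stmt19_rpow_le_max p (by positivity) hx0 hx1.le
    have h2 : 0 ≤ x ^ p := Real.rpow_nonneg (by linarith) _
    have h3 : 0 ≤ (Real.pi - x) ^ q := Real.rpow_nonneg (by linarith) _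
    rw [Real.norm_eq_abs, abs_of_nonneg (mul_nonneg h2 h3)]
    exact mul_le_mul_of_nonneg_right h1 h3
  have : Set.Ioo 0 Real.pi ⊆ Set.Ioc 0 (Real.pi / 2) ∪ Set.Ico (Real.pi / 2) Real.pi := by
    intro x hx
    rcases le_or_gt x (Real.pi / 2) with h | h
    · exact Or.inl ⟨hx.1, h⟩
    · exact Or.inr ⟨h.le, hx.2⟩
  exact (hL.union hR).mono_set this

private lemma stmt19_hA_meas : MeasurableSet {θ : Fin 1 → ℝ | ∀ i, 0 < θ i ∧ θ i < Real.pi} := by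
  rw [Set.setOf_forall]
  exact MeasurableSet.iInter fun i =>
    (measurable_pi_apply i) measurableSet_Ioo


private lemma stmt19_lint_eq (α β : Fin 1 → ℝ) (g : ℝ → ℝ≥0∞) (hg : Measurable g) :
    ∫⁻ θ, g (θ 0) ∂ etaM 1 α β =
      ∫⁻ x in Set.Ioo 0 Real.pi,
        ENNReal.ofReal (x ^ (2 * α 0 + 1) * (Real.pi - x) ^ (2 * β 0 + 1)) * g x := by
  have hρ : Measurable fun θ : Fin 1 → ℝ =>
      ENNReal.ofReal (∏ i, θ i ^ (2 * α i + 1) * (Real.pi - θ i) ^ (2 * β i + 1)) := by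
    simp only [Fin.prod_univ_one]
    fun_prop
  have hg' : Measurable fun θ : Fin 1 → ℝ => g (θ 0) := hg.comp (measurable_pi_apply 0)
  rw [etaM]
  rw [setLIntegral_withDensity_eq_setLIntegral_mul _ hρ hg' stmt19_hA_meas]
  have hAeq : {θ : Fin 1 → ℝ | ∀ i, 0 < θ i ∧ θ i < Real.pi} =
      (MeasurableEquiv.funUnique (Fin 1) ℝ) ⁻¹' (Set.Ioo 0 Real.pi) := by
    ext θ
    simp [MeasurableEquiv.funUnique, Fin.forall_fin_one, Set.mem_Ioo]
  have hfun : (fun θ : Fin 1 → ℝ =>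
      ENNReal.ofReal (∏ i, θ i ^ (2 * α i + 1) * (Real.pi - θ i) ^ (2 * β i + 1)) * g (θ 0)) =
      fun θ => (fun x => ENNReal.ofReal (x ^ (2 * α 0 + 1) * (Real.pi - x) ^ (2 * β 0 + 1)) * g x)
        ((MeasurableEquiv.funUnique (Fin 1) ℝ) θ) := by
    funext θ
    simp [Fin.prod_univ_one, MeasurableEquiv.funUnique]
  simp only [Pi.mul_apply]
  rw [hAeq, hfun]
  exact (volume_preserving_funUnique (Fin 1) ℝ).setLIntegral_comp_preimage_emb
    (MeasurableEquiv.measurableEmbedding _)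
    (fun x => ENNReal.ofReal (x ^ (2 * α 0 + 1) * (Real.pi - x) ^ (2 * β 0 + 1)) * g x)
    (Set.Ioo 0 Real.pi)

end Stmt19Aux

/-- In dimension `d = 1`, for `E, F ⊂ {1}`, `α ∈ A(E)`, `β ∈ A(F)` with
`m_E(α) < 0` and `m_F(β) < 0`, the operator
`N^{(α,E),(β,F)} f(θ) = ∫₀^π χ_{{|θ−φ| ≥ π/2}} [sup_{0<t≤1} 𝕂_t^{(α,E),(β,F)}(θ,φ)] f(φ)
dη_{α,β}(φ)` is of strong type `(1,1)` with respect to `η_{α,β}`. -/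
theorem stmt19 (c₂ : ℝ) (hc₂ : 0 < c₂) (E F : Finset (Fin 1)) (α β : Fin 1 → ℝ)
    (hαE : ∀ i ∈ E, α i ≠ 0 ∧ α i < 1) (hαEc : ∀ i ∉ E, -1 < α i)
    (hβF : ∀ i ∈ F, β i ≠ 0 ∧ β i < 1) (hβFc : ∀ i ∉ F, -1 < β i)
    (hmE : ∀ i ∈ E, α i < 0) (hmF : ∀ i ∈ F, β i < 0) :
    ∃ C : ℝ, 0 < C ∧ ∀ f : (Fin 1 → ℝ) → ℝ, (∀ θ, 0 ≤ f θ) →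
      Integrable f (etaM 1 α β) →
      (∫⁻ θ, (∫⁻ φ in {φ : Fin 1 → ℝ | Real.pi / 2 ≤ |θ 0 - φ 0|},
          (⨆ t ∈ Set.Ioc (0 : ℝ) 1, ENNReal.ofReal (KKj 1 c₂ E F α β t θ φ)) *
            ENNReal.ofReal (f φ) ∂(etaM 1 α β)) ∂(etaM 1 α β)) ≤
        ENNReal.ofReal (C * ∫ φ, f φ ∂(etaM 1 α β)) := by
  classical
  have hπ := Real.pi_pos
  set u : ℝ := if (0 : Fin 1) ∈ E then -2 * α 0 else 0 with hu_def
  set v : ℝ := if (0 : Fin 1) ∈ F then -2 * β 0 else 0 with hv_def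
  set a : ℝ := if (0 : Fin 1) ∈ E then -α 0 else α 0 with ha_def
  set b : ℝ := if (0 : Fin 1) ∈ F then -β 0 else β 0 with hb_def
  have hu : 0 ≤ u := by
    rw [hu_def]; split_ifs with h
    · linarith [hmE 0 h]
    · exact le_refl 0
  have hv : 0 ≤ v := by
    rw [hv_def]; split_ifs with h
    · linarith [hmF 0 h]
    · exact le_refl 0
  set p : ℝ := u + (2 * α 0 + 1) with hp_def
  set q : ℝ := v + (2 * β 0 + 1) with hq_def
  have hp : -1 < p := by
    rw [hp_def, hu_def]; split_ifs with h
    · linarith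
    · linarith [hαEc 0 h]
  have hq : -1 < q := by
    rw [hq_def, hv_def]; split_ifs with h
    · linarith
    · linarith [hβFc 0 h]
  obtain ⟨B, hBpos, hB⟩ := stmt19_kernel_bound c₂ hc₂ u v a b hu hv
  have hJint := stmt19_integ_pq p q hp hq
  set J : ℝ := ∫ x in Set.Ioo 0 Real.pi, x ^ p * (Real.pi - x) ^ q with hJ_def
  have hJ0 : 0 ≤ J := by
    rw [hJ_def]
    exact setIntegral_nonneg measurableSet_Ioo fun x hx =>
      mul_nonneg (Real.rpow_nonneg hx.1.le _) (Real.rpow_nonneg (by linarith [hx.2]) _)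
  refine ⟨B * J + 1, by positivity, fun f hf hfint => ?_⟩
  have hKK : ∀ (t : ℝ) (θ φ : Fin 1 → ℝ), KKj 1 c₂ E F α β t θ φ =
      (θ 0 * φ 0) ^ u * ((Real.pi - θ 0) * (Real.pi - φ 0)) ^ v *
        Kj c₂ a b t (θ 0) (φ 0) := by
    intro t θ φ
    simp only [KKj, Fin.prod_univ_one, hu_def, hv_def, ha_def, hb_def]
  have hI : ∫⁻ φ, ENNReal.ofReal (f φ) ∂ etaM 1 α β =
      ENNReal.ofReal (∫ φ, f φ ∂ etaM 1 α β) :=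
    (ofReal_integral_eq_lintegral_ofReal hfint (Filter.Eventually.of_forall hf)).symm
  have hInt0 : 0 ≤ ∫ φ, f φ ∂ etaM 1 α β := integral_nonneg hf
  have hae : ∀ᵐ θ ∂ etaM 1 α β, θ ∈ {θ : Fin 1 → ℝ | ∀ i, 0 < θ i ∧ θ i < Real.pi} := by
    rw [etaM]
    exact ae_restrict_mem stmt19_hA_meas
  have hS : ∀ z : ℝ, MeasurableSet {φ : Fin 1 → ℝ | Real.pi / 2 ≤ |z - φ 0|} := fun z =>
    measurableSet_le measurable_const (by fun_prop)
  have key : ∀ᵐ θ ∂ etaM 1 α β,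
      (∫⁻ φ in {φ : Fin 1 → ℝ | Real.pi / 2 ≤ |θ 0 - φ 0|},
        (⨆ t ∈ Set.Ioc (0 : ℝ) 1, ENNReal.ofReal (KKj 1 c₂ E F α β t θ φ)) *
          ENNReal.ofReal (f φ) ∂(etaM 1 α β)) ≤
      ENNReal.ofReal (B * (θ 0 ^ u * (Real.pi - θ 0) ^ v)) *
        ENNReal.ofReal (∫ φ, f φ ∂ etaM 1 α β) := by
    filter_upwards [hae] with θ hθ
    obtain ⟨hθ0, hθπ⟩ := hθ 0
    calc ∫⁻ φ in {φ : Fin 1 → ℝ | Real.pi / 2 ≤ |θ 0 - φ 0|},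
          (⨆ t ∈ Set.Ioc (0 : ℝ) 1, ENNReal.ofReal (KKj 1 c₂ E F α β t θ φ)) *
            ENNReal.ofReal (f φ) ∂(etaM 1 α β)
        ≤ ∫⁻ φ in {φ : Fin 1 → ℝ | Real.pi / 2 ≤ |θ 0 - φ 0|},
            ENNReal.ofReal (B * (θ 0 ^ u * (Real.pi - θ 0) ^ v)) *
              ENNReal.ofReal (f φ) ∂(etaM 1 α β) := by
          refine lintegral_mono_ae ?_
          filter_upwards [ae_restrict_of_ae hae, ae_restrict_mem (hS (θ 0))] with φ hφ hφS
          refine mul_le_mul_left ?_ _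
          refine iSup₂_le fun t ht => ENNReal.ofReal_le_ofReal ?_
          rw [hKK]
          exact hB t ht (θ 0) (φ 0) hθ0 hθπ (hφ 0).1 (hφ 0).2 hφS
      _ = ENNReal.ofReal (B * (θ 0 ^ u * (Real.pi - θ 0) ^ v)) *
            ∫⁻ φ in {φ : Fin 1 → ℝ | Real.pi / 2 ≤ |θ 0 - φ 0|},
              ENNReal.ofReal (f φ) ∂(etaM 1 α β) :=
          lintegral_const_mul' _ _ ENNReal.ofReal_ne_top
      _ ≤ ENNReal.ofReal (B * (θ 0 ^ u * (Real.pi - θ 0) ^ v)) *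
            ∫⁻ φ, ENNReal.ofReal (f φ) ∂(etaM 1 α β) :=
          mul_le_mul_right (lintegral_mono' Measure.restrict_le_self le_rfl) _
      _ = ENNReal.ofReal (B * (θ 0 ^ u * (Real.pi - θ 0) ^ v)) *
            ENNReal.ofReal (∫ φ, f φ ∂ etaM 1 α β) := by rw [hI]
  have hW : ∫⁻ θ, ENNReal.ofReal (B * (θ 0 ^ u * (Real.pi - θ 0) ^ v)) ∂ etaM 1 α β =
      ENNReal.ofReal (B * J) := by
    have hg : Measurable fun x : ℝ => ENNReal.ofReal (B * (x ^ u * (Real.pi - x) ^ v)) := by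
      fun_prop
    rw [stmt19_lint_eq α β _ hg]
    have hcong : ∫⁻ x in Set.Ioo 0 Real.pi,
        ENNReal.ofReal (x ^ (2 * α 0 + 1) * (Real.pi - x) ^ (2 * β 0 + 1)) *
          ENNReal.ofReal (B * (x ^ u * (Real.pi - x) ^ v)) =
        ∫⁻ x in Set.Ioo 0 Real.pi, ENNReal.ofReal B *
          ENNReal.ofReal (x ^ p * (Real.pi - x) ^ q) := by
      refine setLIntegral_congr_fun measurableSet_Ioo (
        fun x hx => ?_)
      obtain ⟨hx0, hxπ⟩ := hx
      rw [← ENNReal.ofReal_mul (mul_nonneg (Real.rpow_nonneg hx0.le _)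
        (Real.rpow_nonneg (by linarith) _)), ← ENNReal.ofReal_mul hBpos.le]
      congr 1
      have e1 : x ^ p = x ^ (2 * α 0 + 1) * x ^ u := by
        rw [hp_def, show u + (2 * α 0 + 1) = (2 * α 0 + 1) + u by ring, Real.rpow_add hx0]
      have e2 : (Real.pi - x) ^ q = (Real.pi - x) ^ (2 * β 0 + 1) * (Real.pi - x) ^ v := by
        rw [hq_def, show v + (2 * β 0 + 1) = (2 * β 0 + 1) + v by ring,
          Real.rpow_add (by linarith : (0:ℝ) < Real.pi - x)]
      rw [e1, e2]; ring
    have hnn : 0 ≤ᵐ[volume.restrict (Set.Ioo 0 Real.pi)]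
        fun x : ℝ => x ^ p * (Real.pi - x) ^ q := by
      refine (ae_restrict_iff' measurableSet_Ioo).mpr (Filter.Eventually.of_forall
        fun x hx => ?_)
      exact mul_nonneg (Real.rpow_nonneg hx.1.le _) (Real.rpow_nonneg (by linarith [hx.2]) _)
    rw [hcong, lintegral_const_mul' _ _ ENNReal.ofReal_ne_top,
      ← ofReal_integral_eq_lintegral_ofReal hJint hnn, ← hJ_def,
      ← ENNReal.ofReal_mul hBpos.le]
  calc ∫⁻ θ, (∫⁻ φ in {φ : Fin 1 → ℝ | Real.pi / 2 ≤ |θ 0 - φ 0|},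
        (⨆ t ∈ Set.Ioc (0 : ℝ) 1, ENNReal.ofReal (KKj 1 c₂ E F α β t θ φ)) *
          ENNReal.ofReal (f φ) ∂(etaM 1 α β)) ∂(etaM 1 α β)
      ≤ ∫⁻ θ, ENNReal.ofReal (B * (θ 0 ^ u * (Real.pi - θ 0) ^ v)) *
          ENNReal.ofReal (∫ φ, f φ ∂ etaM 1 α β) ∂(etaM 1 α β) := lintegral_mono_ae key
    _ = (∫⁻ θ, ENNReal.ofReal (B * (θ 0 ^ u * (Real.pi - θ 0) ^ v)) ∂ etaM 1 α β) *
          ENNReal.ofReal (∫ φ, f φ ∂ etaM 1 α β) :=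
        lintegral_mul_const' _ _ ENNReal.ofReal_ne_top
    _ = ENNReal.ofReal (B * J) * ENNReal.ofReal (∫ φ, f φ ∂ etaM 1 α β) := by rw [hW]
    _ = ENNReal.ofReal (B * J * ∫ φ, f φ ∂ etaM 1 α β) := by
        rw [← ENNReal.ofReal_mul (by positivity)]
    _ ≤ ENNReal.ofReal ((B * J + 1) * ∫ φ, f φ ∂ etaM 1 α β) :=
        ENNReal.ofReal_le_ofReal (by nlinarith)
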